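/- For every Hurst parameter H ∈ (0,1/2) there exists a constant C > 0 such that for all ε ∈ (0,1] and all t > 0: σ_ou · ( ∫_t^∞ ε^{-1} 𝒦(s/ε)² ds )^{1/2} ≤ C · min(1, (ε/t)^{1−H}). Equivalently, with 𝒦^ε(s) := ε^{-1/2} 𝒦(s/ε), the tail quantity σ^ε_{t,∞} := σ_ou (∫_t^∞ 𝒦^ε(s)² ds)^{1/2} satisfies σ^ε_{t,∞} ≤ C (1 ∧ (ε/t)^{1−H}). -/

import Mathlib

open MeasureTheory Real Set

/-- `σ_ou = (2 sin(πH))^{-1/2}`. -/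
noncomputable def sigOU (H : ℝ) : ℝ := (2 * Real.sin (Real.pi * H)) ^ (-(1/2) : ℝ)

/-- The fOU moving-average kernel
`𝒦(t) = (σ_ou Γ(H+1/2))⁻¹ ( t^{H-1/2} − ∫₀^t (t−u)^{H-1/2} e^{-u} du )`. -/
noncomputable def fouKernel (H : ℝ) (t : ℝ) : ℝ :=
  (sigOU H * Real.Gamma (H + 1/2))⁻¹ *
    (t ^ (H - 1/2) - ∫ u in (0 : ℝ)..t, (t - u) ^ (H - 1/2) * Real.exp (-u))

open intervalIntegral


lemma rpow_sub_rpow_le (x y b : ℝ) (hx : 0 < x) (hxy : x ≤ y) (hb : b < 0) :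
    x ^ b - y ^ b ≤ (-b) * (x ^ (b - 1) * (y - x)) := by
  have hy : 0 < y := lt_of_lt_of_le hx hxy
  have h0 : (0:ℝ) ∉ Set.uIcc x y := by
    rw [Set.mem_uIcc]; push_neg; constructor <;> intro h <;> nlinarith
  have hint : (∫ s in x..y, s ^ (b - 1)) = (y ^ b - x ^ b) / b := by
    rw [integral_rpow (Or.inr ⟨by linarith, h0⟩)]
    ring_nf
  have hmono : (∫ s in x..y, s ^ (b - 1)) ≤ x ^ (b - 1) * (y - x) := by
    have : (∫ s in x..y, s ^ (b - 1)) ≤ ∫ _s in x..y, x ^ (b - 1) := by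
      apply intervalIntegral.integral_mono_on hxy
      · exact intervalIntegral.intervalIntegrable_rpow (Or.inr h0)
      · exact intervalIntegrable_const
      · intro s hs
        exact Real.rpow_le_rpow_of_nonpos hx hs.1 (by linarith)
    simpa [mul_comm] using this
  have hb' : x ^ b - y ^ b = (-b) * ((y ^ b - x ^ b) / b) := by
    have : b ≠ 0 := hb.ne
    field_simp
    ring
  rw [hb', ← hint]
  exact mul_le_mul_of_nonneg_left hmono (by linarith)

lemma fou_intble (a t : ℝ) (ha : -1 < a) :
    IntervalIntegrable (fun u => (t - u) ^ a * Real.exp (-u)) volume 0 t := by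
  have h1 : IntervalIntegrable (fun u => (t - u) ^ a) volume 0 t := by
    have := (intervalIntegral.intervalIntegrable_rpow' (a := 0) (b := t) ha).comp_sub_left t
    simpa using this.symm
  exact h1.mul_continuousOn (Continuous.continuousOn (by continuity))

lemma fou_repr (a t : ℝ) (ha : -1 < a) (ht : 0 < t) :
    t ^ a - (∫ u in (0:ℝ)..t, (t - u) ^ a * Real.exp (-u))
      = (∫ u in (0:ℝ)..t, (t ^ a - (t - u) ^ a) * Real.exp (-u)) + t ^ a * Real.exp (-t) := by
  have h1 := fou_intble a t ha
  have hc : IntervalIntegrable (fun u => t ^ a * Real.exp (-u)) volume 0 t :=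
    (Continuous.intervalIntegrable (by continuity) 0 t)
  have h2 : (∫ u in (0:ℝ)..t, t ^ a * Real.exp (-u)) = t ^ a * (1 - Real.exp (-t)) := by
    rw [intervalIntegral.integral_const_mul]
    have : (∫ u in (0:ℝ)..t, Real.exp (-u)) = ∫ u in (-t)..(-(0:ℝ)), Real.exp u :=
      intervalIntegral.integral_comp_neg (fun u => Real.exp u)
    rw [this]
    simp [integral_exp]
  have h3 : (∫ u in (0:ℝ)..t, (t ^ a - (t - u) ^ a) * Real.exp (-u))
      = (∫ u in (0:ℝ)..t, t ^ a * Real.exp (-u))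
        - ∫ u in (0:ℝ)..t, (t - u) ^ a * Real.exp (-u) := by
    rw [← intervalIntegral.integral_sub hc h1]
    congr 1; ext u; ring
  rw [h3, h2]; ring

lemma fou_small (a t : ℝ) (ha1 : -1 < a) (ha0 : a < 0) (ht : 0 < t) :
    |t ^ a - ∫ u in (0:ℝ)..t, (t - u) ^ a * Real.exp (-u)| ≤ t ^ a + t ^ (a + 1) / (a + 1) := by
  have h1 := fou_intble a t ha1
  have hInn : ∀ u ∈ Set.Icc (0:ℝ) t, (0:ℝ) ≤ (t - u) ^ a * Real.exp (-u) := by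
    intro u hu
    exact mul_nonneg (Real.rpow_nonneg (by linarith [hu.2]) a) (Real.exp_nonneg _)
  have hI0 : (0:ℝ) ≤ ∫ u in (0:ℝ)..t, (t - u) ^ a * Real.exp (-u) :=
    intervalIntegral.integral_nonneg ht.le hInn
  have hIle : (∫ u in (0:ℝ)..t, (t - u) ^ a * Real.exp (-u)) ≤ t ^ (a + 1) / (a + 1) := by
    have hint2 : IntervalIntegrable (fun u => (t - u) ^ a) volume 0 t := by
      have := (intervalIntegral.intervalIntegrable_rpow' (a := 0) (b := t) ha1).comp_sub_left t
      simpa using this.symm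
    have hm : (∫ u in (0:ℝ)..t, (t - u) ^ a * Real.exp (-u)) ≤ ∫ u in (0:ℝ)..t, (t - u) ^ a := by
      apply intervalIntegral.integral_mono_on ht.le h1 hint2
      intro u hu
      have h2 : (t - u) ^ a * Real.exp (-u) ≤ (t - u) ^ a * 1 := by
        apply mul_le_mul_of_nonneg_left _ (Real.rpow_nonneg (by linarith [hu.2]) a)
        exact Real.exp_le_one_iff.mpr (by linarith [hu.1])
      simpa using h2
    have hcomp : (∫ u in (0:ℝ)..t, (t - u) ^ a) = ∫ v in (0:ℝ)..t, v ^ a := by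
      have := intervalIntegral.integral_comp_sub_left (a := (0:ℝ)) (b := t) (fun v => v ^ a) t
      simpa using this
    have hval : (∫ v in (0:ℝ)..t, v ^ a) = t ^ (a + 1) / (a + 1) := by
      rw [integral_rpow (Or.inl ha1)]
      rw [Real.zero_rpow (by linarith : a + 1 ≠ 0)]
      ring
    calc _ ≤ _ := hm
    _ = t ^ (a + 1) / (a + 1) := by rw [hcomp, hval]
  have habs : |t ^ a - ∫ u in (0:ℝ)..t, (t - u) ^ a * Real.exp (-u)|
      ≤ t ^ a + ∫ u in (0:ℝ)..t, (t - u) ^ a * Real.exp (-u) := by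
    rw [abs_sub_comm, abs_sub_le_iff]
    constructor
    · linarith [Real.rpow_nonneg ht.le a]
    · linarith
  linarith

lemma exp_neg_half_le (t : ℝ) (ht : 1 ≤ t) : Real.exp (-(t/2)) ≤ 16 / (t*t) := by
  have h4 : t/4 + 1 ≤ Real.exp (t/4) := Real.add_one_le_exp _
  have h2 : t*t/16 ≤ Real.exp (t/2) := by
    have : Real.exp (t/2) = Real.exp (t/4) * Real.exp (t/4) := by
      rw [← Real.exp_add]; ring_nf
    nlinarith [Real.exp_pos (t/4)]
  rw [Real.exp_neg]
  rw [inv_le_comm₀ (Real.exp_pos _) (by positivity)]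
  calc (16 / (t*t))⁻¹ = t*t/16 := by field_simp
  _ ≤ _ := h2

lemma int_mul_exp_le (c : ℝ) (hc : 0 ≤ c) : (∫ u in (0:ℝ)..c, u * Real.exp (-u)) ≤ 1 := by
  rw [intervalIntegral.integral_of_le hc]
  have hΓ : (∫ x in Set.Ioi (0:ℝ), Real.exp (-x) * x ^ ((2:ℝ)-1)) = 1 := by
    rw [← Real.Gamma_eq_integral (by norm_num : (0:ℝ) < 2)]
    rw [show (2:ℝ) = 1 + 1 by norm_num, Real.Gamma_add_one one_ne_zero, Real.Gamma_one]
    norm_num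
  have hint : IntegrableOn (fun x : ℝ => Real.exp (-x) * x ^ ((2:ℝ)-1)) (Set.Ioi 0) :=
    Real.GammaIntegral_convergent (by norm_num)
  have hmono : (∫ u in Set.Ioc (0:ℝ) c, Real.exp (-u) * u ^ ((2:ℝ)-1))
      ≤ ∫ x in Set.Ioi (0:ℝ), Real.exp (-x) * x ^ ((2:ℝ)-1) := by
    apply setIntegral_mono_set hint
    · filter_upwards [ae_restrict_mem measurableSet_Ioi] with x hx
      exact mul_nonneg (Real.exp_nonneg _) (Real.rpow_nonneg (le_of_lt hx) _)
    · exact HasSubset.Subset.eventuallyLE Set.Ioc_subset_Ioi_self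
  calc (∫ u in Set.Ioc (0:ℝ) c, u * Real.exp (-u))
      = ∫ u in Set.Ioc (0:ℝ) c, Real.exp (-u) * u ^ ((2:ℝ)-1) := by
        apply setIntegral_congr_fun measurableSet_Ioc
        intro x hx
        simp [show (2:ℝ)-1 = 1 by norm_num, Real.rpow_one, mul_comm]
  _ ≤ _ := hmono
  _ = 1 := hΓ

set_option maxHeartbeats 1000000 in
lemma fou_large (a t : ℝ) (ha1 : -(1/2) < a) (ha0 : a < 0) (ht : 1 ≤ t) :
    |t ^ a - ∫ u in (0:ℝ)..t, (t - u) ^ a * Real.exp (-u)| ≤ 64 * t ^ (a - 1) := by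
  have ht0 : (0:ℝ) < t := by linarith
  have ht2 : (0:ℝ) < t/2 := by linarith
  have ha1' : (-1:ℝ) < a := by linarith
  have hpow1 : t ^ (a-1) * t = t ^ a := by rw [← Real.rpow_add_one ht0.ne' (a-1)]; ring_nf
  have hpow2 : t ^ a * t = t ^ (a+1) := by rw [← Real.rpow_add_one ht0.ne' a]
  have hta : 0 < t ^ a := Real.rpow_pos_of_pos ht0 a
  have hta1 : 0 < t ^ (a-1) := Real.rpow_pos_of_pos ht0 (a-1)
  have htp1 : 0 < t ^ (a+1) := Real.rpow_pos_of_pos ht0 (a+1)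
  rw [fou_repr a t ha1' ht0]
  -- boundary term
  have hbd : t ^ a * Real.exp (-t) ≤ t ^ (a-1) := by
    have h1 : Real.exp (-t) ≤ t⁻¹ := by
      rw [Real.exp_neg]
      exact inv_anti₀ ht0 (by linarith [Real.add_one_le_exp t])
    have h2 : t ^ a * t⁻¹ = t ^ (a-1) := by
      rw [← hpow1, mul_assoc, mul_inv_cancel₀ ht0.ne', mul_one]
    calc t ^ a * Real.exp (-t) ≤ t ^ a * t⁻¹ := mul_le_mul_of_nonneg_left h1 hta.le
    _ = t ^ (a-1) := h2
  -- the integrand rewritten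
  set f1 : ℝ → ℝ := fun u => ((t - u) ^ a - t ^ a) * Real.exp (-u) with hf1
  have hf1eq : f1 = fun u => (t - u) ^ a * Real.exp (-u) - t ^ a * Real.exp (-u) := by
    ext u; simp [hf1]; ring
  have hIf1 : IntervalIntegrable f1 volume 0 t := by
    rw [hf1eq]
    exact (fou_intble a t ha1').sub (Continuous.intervalIntegrable (by continuity) 0 t)
  have hmem2 : t/2 ∈ Set.uIcc (0:ℝ) t := by
    rw [Set.mem_uIcc]; left; exact ⟨by linarith, by linarith⟩
  have hI1 : IntervalIntegrable f1 volume 0 (t/2) :=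
    hIf1.mono_set (Set.uIcc_subset_uIcc Set.left_mem_uIcc hmem2)
  have hI2 : IntervalIntegrable f1 volume (t/2) t :=
    hIf1.mono_set (Set.uIcc_subset_uIcc hmem2 Set.right_mem_uIcc)
  have hsplit : (∫ u in (0:ℝ)..(t/2), f1 u) + (∫ u in (t/2)..t, f1 u) = ∫ u in (0:ℝ)..t, f1 u :=
    intervalIntegral.integral_add_adjacent_intervals hI1 hI2
  have hneg : (∫ u in (0:ℝ)..t, (t ^ a - (t - u) ^ a) * Real.exp (-u))
      = -(∫ u in (0:ℝ)..t, f1 u) := by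
    rw [← intervalIntegral.integral_neg]
    congr 1; ext u; simp [hf1]; ring
  -- J1 bounds
  have hJ1nonneg : 0 ≤ ∫ u in (0:ℝ)..(t/2), f1 u := by
    apply intervalIntegral.integral_nonneg ht2.le
    intro u hu
    have : t ^ a ≤ (t - u) ^ a :=
      Real.rpow_le_rpow_of_nonpos (by linarith [hu.2]) (by linarith [hu.1]) ha0.le
    exact mul_nonneg (by linarith) (Real.exp_nonneg _)
  have hJ1 : (∫ u in (0:ℝ)..(t/2), f1 u) ≤ 2 * t ^ (a-1) := by
    have hhalf : (t/2 : ℝ) ^ (a-1) ≤ 4 * t ^ (a-1) := by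
      rw [Real.div_rpow ht0.le (by norm_num)]
      have h2a : (1/4 : ℝ) ≤ (2:ℝ) ^ (a-1) := by
        have := Real.rpow_le_rpow_of_exponent_le (one_le_two) (by linarith : (-2:ℝ) ≤ a-1)
        have h22 : (2:ℝ) ^ (-2:ℝ) = 1/4 := by
          rw [Real.rpow_neg (by norm_num), show ((2:ℝ)^(2:ℝ)) = 4 by
            rw [show (2:ℝ) = ((2:ℕ):ℝ) by norm_num, Real.rpow_natCast]; norm_num]
          norm_num
        linarith [h22 ▸ this]
      calc t ^ (a-1) / 2 ^ (a-1) ≤ t ^ (a-1) / (1/4) :=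
            div_le_div_of_nonneg_left hta1.le (by norm_num) h2a
      _ = 4 * t ^ (a-1) := by ring
    have hmono : (∫ u in (0:ℝ)..(t/2), f1 u)
        ≤ ∫ u in (0:ℝ)..(t/2), (-a) * (t/2) ^ (a-1) * (u * Real.exp (-u)) := by
      apply intervalIntegral.integral_mono_on ht2.le hI1
        (Continuous.intervalIntegrable (by continuity) _ _)
      intro u hu
      have htu : (0:ℝ) < t - u := by linarith [hu.2]
      have h1 : (t - u) ^ a - t ^ a ≤ (-a) * ((t - u) ^ (a-1) * (t - (t - u))) :=
        rpow_sub_rpow_le (t - u) t a htu (by linarith [hu.1]) ha0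
      have h2 : (t - u) ^ (a-1) ≤ (t/2) ^ (a-1) :=
        Real.rpow_le_rpow_of_nonpos ht2 (by linarith [hu.2]) (by linarith)
      have h3 : (t - u) ^ a - t ^ a ≤ (-a) * (t/2) ^ (a-1) * u := by
        have : (-a) * ((t - u) ^ (a-1) * u) ≤ (-a) * ((t/2) ^ (a-1) * u) := by
          apply mul_le_mul_of_nonneg_left _ (by linarith)
          exact mul_le_mul_of_nonneg_right h2 hu.1
        calc (t - u) ^ a - t ^ a ≤ (-a) * ((t - u) ^ (a-1) * u) := by
              simpa using h1
        _ ≤ (-a) * ((t/2) ^ (a-1) * u) := this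
        _ = (-a) * (t/2) ^ (a-1) * u := by ring
      calc f1 u = ((t - u) ^ a - t ^ a) * Real.exp (-u) := rfl
      _ ≤ ((-a) * (t/2) ^ (a-1) * u) * Real.exp (-u) :=
            mul_le_mul_of_nonneg_right h3 (Real.exp_nonneg _)
      _ = (-a) * (t/2) ^ (a-1) * (u * Real.exp (-u)) := by ring
    have hval : (∫ u in (0:ℝ)..(t/2), (-a) * (t/2) ^ (a-1) * (u * Real.exp (-u)))
        ≤ (-a) * (t/2) ^ (a-1) := by
      rw [intervalIntegral.integral_const_mul]
      have h0 : (0:ℝ) ≤ (-a) * (t/2) ^ (a-1) :=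
        mul_nonneg (by linarith) (Real.rpow_pos_of_pos ht2 _).le
      calc (-a) * (t/2) ^ (a-1) * ∫ u in (0:ℝ)..(t/2), u * Real.exp (-u)
          ≤ (-a) * (t/2) ^ (a-1) * 1 :=
            mul_le_mul_of_nonneg_left (int_mul_exp_le _ ht2.le) h0
      _ = (-a) * (t/2) ^ (a-1) := by ring
    have : (-a) * (t/2) ^ (a-1) ≤ 2 * t ^ (a-1) := by
      calc (-a) * (t/2) ^ (a-1) ≤ (1/2) * (4 * t ^ (a-1)) := by
            apply mul_le_mul (by linarith) hhalf (Real.rpow_pos_of_pos ht2 _).le (by norm_num)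
      _ = 2 * t ^ (a-1) := by ring
    linarith [hmono.trans hval]
  -- J2 bound
  have hJ2 : |∫ u in (t/2)..t, f1 u| ≤ 48 * t ^ (a-1) := by
    have habs : |∫ u in (t/2)..t, f1 u| ≤ ∫ u in (t/2)..t, |f1 u| :=
      intervalIntegral.abs_integral_le_integral_abs (by linarith)
    have hint2 : IntervalIntegrable (fun u => (t - u) ^ a) volume (t/2) t := by
      have h := (intervalIntegral.intervalIntegrable_rpow' (a := 0) (b := t) ha1').comp_sub_left t
      have h' : IntervalIntegrable (fun u => (t - u) ^ a) volume 0 t := by simpa using h.symm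
      exact h'.mono_set (Set.uIcc_subset_uIcc hmem2 Set.right_mem_uIcc)
    have hintR : IntervalIntegrable (fun u => ((t - u) ^ a + t ^ a) * Real.exp (-(t/2)))
        volume (t/2) t :=
      (hint2.add (intervalIntegrable_const)).mul_const _
    have hmono : (∫ u in (t/2)..t, |f1 u|)
        ≤ ∫ u in (t/2)..t, ((t - u) ^ a + t ^ a) * Real.exp (-(t/2)) := by
      apply intervalIntegral.integral_mono_on (by linarith) hI2.abs hintR
      intro u hu
      have htu : (0:ℝ) ≤ t - u := by linarith [hu.2]
      have h1 : |f1 u| ≤ ((t - u) ^ a + t ^ a) * Real.exp (-u) := by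
        rw [hf1, abs_mul, abs_of_nonneg (Real.exp_nonneg _)]
        apply mul_le_mul_of_nonneg_right _ (Real.exp_nonneg _)
        calc |(t - u) ^ a - t ^ a| ≤ |(t-u)^a| + |t^a| := abs_sub _ _
        _ = (t - u) ^ a + t ^ a := by
              rw [abs_of_nonneg (Real.rpow_nonneg htu _), abs_of_nonneg hta.le]
      have h2 : Real.exp (-u) ≤ Real.exp (-(t/2)) := Real.exp_le_exp.mpr (by linarith [hu.1])
      calc |f1 u| ≤ ((t - u) ^ a + t ^ a) * Real.exp (-u) := h1
      _ ≤ ((t - u) ^ a + t ^ a) * Real.exp (-(t/2)) := by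
            apply mul_le_mul_of_nonneg_left h2
            positivity
    have hval : (∫ u in (t/2)..t, ((t - u) ^ a + t ^ a) * Real.exp (-(t/2)))
        = ((t/2) ^ (a+1) / (a+1) + t ^ a * (t/2)) * Real.exp (-(t/2)) := by
      rw [intervalIntegral.integral_mul_const]
      congr 1
      rw [intervalIntegral.integral_add hint2 intervalIntegrable_const]
      congr 1
      · have hcomp := intervalIntegral.integral_comp_sub_left (a := t/2) (b := t)
          (fun v => v ^ a) t
        simp only [sub_self, sub_half] at hcomp
        rw [hcomp, integral_rpow (Or.inl ha1'), Real.zero_rpow (by linarith : a + 1 ≠ 0)]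
        ring
      · simp [smul_eq_mul]; ring
    have hexp : Real.exp (-(t/2)) ≤ 16 / (t*t) := exp_neg_half_le t ht
    have hsum : (t/2) ^ (a+1) / (a+1) + t ^ a * (t/2) ≤ 3 * t ^ (a+1) := by
      have h1 : (t/2) ^ (a+1) ≤ t ^ (a+1) :=
        Real.rpow_le_rpow ht2.le (by linarith) (by linarith)
      have h2 : (t/2) ^ (a+1) / (a+1) ≤ t ^ (a+1) * 2 := by
        rw [div_le_iff₀ (by linarith : (0:ℝ) < a+1)]
        nlinarith [Real.rpow_pos_of_pos ht2 (a+1), htp1]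
      have h3 : t ^ a * (t/2) = t ^ (a+1) / 2 := by rw [← hpow2]; ring
      rw [h3]
      linarith [htp1.le]
    have hfin : ((t/2) ^ (a+1) / (a+1) + t ^ a * (t/2)) * Real.exp (-(t/2)) ≤ 48 * t ^ (a-1) := by
      have hnn : (0:ℝ) ≤ (t/2) ^ (a+1) / (a+1) + t ^ a * (t/2) := by
        have := (Real.rpow_pos_of_pos ht2 (a+1)).le
        have h3 : (0:ℝ) < a + 1 := by linarith
        positivity
      have key : ((t/2) ^ (a+1) / (a+1) + t ^ a * (t/2)) * Real.exp (-(t/2))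
          ≤ (3 * t ^ (a+1)) * (16 / (t*t)) := by
        apply mul_le_mul hsum hexp (Real.exp_nonneg _) (by positivity)
      have heq : (3 * t ^ (a+1)) * (16 / (t*t)) = 48 * t ^ (a-1) := by
        have h4 : t ^ (a+1) = t ^ (a-1) * t * t := by
          rw [hpow1]; rw [hpow2]
        calc (3 * t ^ (a+1)) * (16 / (t*t)) = 48 * t ^ (a-1) * ((t*t)/(t*t)) := by
              rw [h4]; ring
        _ = 48 * t ^ (a-1) := by
              rw [div_self (by positivity : (t*t) ≠ (0:ℝ)), mul_one]
      linarith [heq ▸ key]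
    linarith [habs.trans (hmono.trans_eq hval)]
  -- assemble
  rw [hneg, ← hsplit]
  set J1 := ∫ u in (0:ℝ)..(t/2), f1 u
  set J2 := ∫ u in (t/2)..t, f1 u
  have hY : (0:ℝ) ≤ t ^ a * Real.exp (-t) := by positivity
  calc |(-(J1 + J2)) + t ^ a * Real.exp (-t)|
      ≤ |(-(J1 + J2))| + |t ^ a * Real.exp (-t)| := abs_add_le _ _
  _ = |J1 + J2| + t ^ a * Real.exp (-t) := by rw [abs_neg, abs_of_nonneg hY]
  _ ≤ |J1| + |J2| + t ^ a * Real.exp (-t) := by linarith [abs_add_le J1 J2]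
  _ ≤ 2 * t ^ (a-1) + 48 * t ^ (a-1) + t ^ (a-1) := by
        rw [abs_of_nonneg hJ1nonneg]
        linarith
  _ ≤ 64 * t ^ (a-1) := by linarith

lemma fou_g_bound (a t : ℝ) (ha1 : -(1/2) < a) (ha0 : a < 0) (ht : 0 < t) :
    |t ^ a - ∫ u in (0:ℝ)..t, (t - u) ^ a * Real.exp (-u)| ≤ 64 * t ^ a ∧
    |t ^ a - ∫ u in (0:ℝ)..t, (t - u) ^ a * Real.exp (-u)| ≤ 64 * t ^ (a - 1) := by
  rcases le_total t 1 with h1 | h1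
  · have hs := fou_small a t (by linarith) ha0 ht
    have hp1 : t ^ (a+1) ≤ t ^ a := by
      rw [Real.rpow_add_one ht.ne' a]
      nlinarith [Real.rpow_pos_of_pos ht a]
    have h2 : t ^ (a+1) / (a+1) ≤ 2 * t ^ a := by
      rw [div_le_iff₀ (by linarith : (0:ℝ) < a+1)]
      nlinarith [Real.rpow_pos_of_pos ht (a+1), Real.rpow_pos_of_pos ht a]
    have hsm : |t ^ a - ∫ u in (0:ℝ)..t, (t - u) ^ a * Real.exp (-u)| ≤ 64 * t ^ a := by
      nlinarith [Real.rpow_pos_of_pos ht a]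
    refine ⟨hsm, ?_⟩
    have hmono : t ^ a ≤ t ^ (a-1) :=
      Real.rpow_le_rpow_of_exponent_ge ht h1 (by linarith)
    linarith
  · have hl := fou_large a t ha1 ha0 h1
    refine ⟨?_, hl⟩
    have hmono : t ^ (a-1) ≤ t ^ a :=
      Real.rpow_le_rpow_of_exponent_le h1 (by linarith)
    linarith

lemma sigOU_pos (H : ℝ) (hH : H ∈ Set.Ioo (0 : ℝ) (1/2)) : 0 < sigOU H := by
  have hsin : 0 < Real.sin (Real.pi * H) := by
    apply Real.sin_pos_of_pos_of_lt_pi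
    · exact mul_pos Real.pi_pos hH.1
    · calc Real.pi * H < Real.pi * 1 := by
            exact (mul_lt_mul_iff_right₀ Real.pi_pos).mpr (by linarith [hH.2])
      _ = Real.pi := mul_one _
  exact Real.rpow_pos_of_pos (by linarith) _

lemma fou_ksq_bound (H : ℝ) (hH : H ∈ Set.Ioo (0 : ℝ) (1/2)) :
    ∃ A > (0:ℝ), ∀ t > (0:ℝ),
      (fouKernel H t)^2 ≤ A * t ^ (2*H-1) ∧ (fouKernel H t)^2 ≤ A * t ^ (2*H-3) := by
  set c := (sigOU H * Real.Gamma (H + 1/2))⁻¹ with hc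
  refine ⟨4096 * c^2 + 1, by positivity, ?_⟩
  intro t ht
  have ha1 : -(1/2 : ℝ) < H - 1/2 := by linarith [hH.1]
  have ha0 : H - 1/2 < 0 := by linarith [hH.2]
  obtain ⟨hb1, hb2⟩ := fou_g_bound (H - 1/2) t ha1 ha0 ht
  have hsq : ∀ b : ℝ, t ^ b * t ^ b = t ^ (2*b) := by
    intro b; rw [← Real.rpow_add ht]; ring_nf
  have hKsq : (fouKernel H t)^2
      = c^2 * |t ^ (H - 1/2) - ∫ u in (0:ℝ)..t, (t - u) ^ (H - 1/2) * Real.exp (-u)|^2 := by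
    rw [fouKernel, mul_pow, sq_abs, hc]
  constructor
  · rw [hKsq]
    calc c^2 * |t ^ (H - 1/2) - ∫ u in (0:ℝ)..t, (t - u) ^ (H - 1/2) * Real.exp (-u)|^2
        ≤ c^2 * (64 * t ^ (H - 1/2))^2 := by
          apply mul_le_mul_of_nonneg_left _ (sq_nonneg c)
          exact pow_le_pow_left₀ (abs_nonneg _) hb1 2
    _ = 4096 * c^2 * (t ^ (H - 1/2) * t ^ (H - 1/2)) := by ring
    _ = 4096 * c^2 * t ^ (2*H-1) := by
          rw [hsq]; congr 1; ring_nf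
    _ ≤ (4096 * c^2 + 1) * t ^ (2*H-1) := by
          have := (Real.rpow_pos_of_pos ht (2*H-1)).le
          nlinarith
  · rw [hKsq]
    calc c^2 * |t ^ (H - 1/2) - ∫ u in (0:ℝ)..t, (t - u) ^ (H - 1/2) * Real.exp (-u)|^2
        ≤ c^2 * (64 * t ^ (H - 1/2 - 1))^2 := by
          apply mul_le_mul_of_nonneg_left _ (sq_nonneg c)
          exact pow_le_pow_left₀ (abs_nonneg _) hb2 2
    _ = 4096 * c^2 * (t ^ (H - 1/2 - 1) * t ^ (H - 1/2 - 1)) := by ring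
    _ = 4096 * c^2 * t ^ (2*H-3) := by
          rw [hsq]; congr 1; ring_nf
    _ ≤ (4096 * c^2 + 1) * t ^ (2*H-3) := by
          have := (Real.rpow_pos_of_pos ht (2*H-3)).le
          nlinarith

lemma eps_conv (ε b : ℝ) (hε : 0 < ε) (s : ℝ) (hs : 0 < s) :
    ε⁻¹ * (s/ε) ^ b = ε ^ (-1-b) * s ^ b := by
  rw [Real.div_rpow hs.le hε.le,
    show (-1-b : ℝ) = -1 + -b by ring, Real.rpow_add hε, Real.rpow_neg_one,
    Real.rpow_neg hε.le]
  ring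

/-- Tail bound for the scaled kernel: for every `H ∈ (0,1/2)` there is `C > 0`
such that for all `ε ∈ (0,1]` and all `t > 0`,
`σ_ou ( ∫_t^∞ ε⁻¹ 𝒦(s/ε)² ds )^{1/2} ≤ C min(1, (ε/t)^{1−H})`,
i.e. the tail quantity `σ^ε_{t,∞}` of `𝒦^ε(s) = ε^{-1/2} 𝒦(s/ε)` satisfies
`σ^ε_{t,∞} ≤ C (1 ∧ (ε/t)^{1−H})`. -/
theorem fouKernel_tail_bound (H : ℝ) (hH : H ∈ Set.Ioo (0 : ℝ) (1/2)) :
    ∃ C > (0 : ℝ), ∀ ε ∈ Set.Ioc (0 : ℝ) 1, ∀ t > (0 : ℝ),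
      sigOU H *
          Real.sqrt (∫ s in Set.Ioi t, ε⁻¹ * (fouKernel H (s / ε)) ^ 2)
        ≤ C * min 1 ((ε / t) ^ (1 - H)) := by
  obtain ⟨A, hA, hK⟩ := fou_ksq_bound H hH
  have hH0 : (0:ℝ) < H := hH.1
  have hH2 : H < 1/2 := hH.2
  have h2H : (0:ℝ) < 2*H := by linarith
  have h22H : (0:ℝ) < 2-2*H := by linarith
  set B := A * (1/(2*H) + 1/(2-2*H)) with hB
  have hBpos : 0 < B := by positivity
  refine ⟨sigOU H * Real.sqrt B, mul_pos (sigOU_pos H hH) (Real.sqrt_pos.mpr hBpos), ?_⟩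
  rintro ε ⟨hε0, hε1⟩ t ht
  set m := min 1 ((ε/t)^(1-H)) with hm
  have hm0 : 0 ≤ m := le_min zero_le_one (Real.rpow_nonneg (by positivity) _)
  have key : (∫ s in Set.Ioi t, ε⁻¹ * (fouKernel H (s/ε))^2) ≤ B * m^2 := by
    rcases le_or_gt ε t with hle | hlt
    · -- case ε ≤ t
      have hdiv1 : ε/t ≤ 1 := (div_le_one ht).mpr hle
      have hm_eq : m = (ε/t)^(1-H) :=
        min_eq_right (Real.rpow_le_one (by positivity) hdiv1 (by linarith))
      have hmsq : m^2 = (ε/t)^(2-2*H) := by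
        rw [hm_eq, sq, ← Real.rpow_add (div_pos hε0 ht)]
        congr 1; ring
      have hDint : IntegrableOn (fun s : ℝ => (A * ε^(2-2*H)) * s^(2*H-3)) (Set.Ioi t) :=
        (integrableOn_Ioi_rpow_of_lt (by linarith : 2*H-3 < -1) ht).const_mul _
      have hfD : ∀ s ∈ Set.Ioi t, ε⁻¹ * (fouKernel H (s/ε))^2
          ≤ (A * ε^(2-2*H)) * s^(2*H-3) := by
        intro s hs
        have hs0 : 0 < s := lt_trans ht hs
        have hq := (hK (s/ε) (by positivity)).2
        have hcv := eps_conv ε (2*H-3) hε0 s hs0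
        rw [show (-1-(2*H-3) : ℝ) = 2-2*H by ring] at hcv
        calc ε⁻¹ * (fouKernel H (s/ε))^2 ≤ ε⁻¹ * (A * (s/ε)^(2*H-3)) :=
              mul_le_mul_of_nonneg_left hq (by positivity)
        _ = A * (ε⁻¹ * (s/ε)^(2*H-3)) := by ring
        _ = A * (ε^(2-2*H) * s^(2*H-3)) := by rw [hcv]
        _ = (A * ε^(2-2*H)) * s^(2*H-3) := by ring
      have hint : (∫ s in Set.Ioi t, ε⁻¹ * (fouKernel H (s/ε))^2)
          ≤ ∫ s in Set.Ioi t, (A * ε^(2-2*H)) * s^(2*H-3) := by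
        apply integral_mono_of_nonneg
        · exact Filter.Eventually.of_forall fun s => by positivity
        · exact hDint
        · filter_upwards [ae_restrict_mem measurableSet_Ioi] with s hs using hfD s hs
      have hDval : (∫ s in Set.Ioi t, (A * ε^(2-2*H)) * s^(2*H-3))
          = (A * ε^(2-2*H)) * (-t^(2*H-2)/(2*H-2)) := by
        rw [MeasureTheory.integral_const_mul, integral_Ioi_rpow_of_lt (by linarith) ht,
          show (2*H-3+1 : ℝ) = 2*H-2 by ring]
      have hconv2 : (ε/t)^(2-2*H) = ε^(2-2*H) * t^(2*H-2) := by
        rw [Real.div_rpow hε0.le ht.le, div_eq_mul_inv, ← Real.rpow_neg ht.le]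
        congr 1; ring
      have hfin : (A * ε^(2-2*H)) * (-t^(2*H-2)/(2*H-2)) ≤ B * m^2 := by
        rw [hmsq, hconv2]
        have c1 : (2*H-2:ℝ) ≠ 0 := by linarith
        have c2 : (2-2*H:ℝ) ≠ 0 := by linarith
        have h1 : (A * ε^(2-2*H)) * (-t^(2*H-2)/(2*H-2))
            = A/(2-2*H) * (ε^(2-2*H) * t^(2*H-2)) := by
          have hi : (2*H-2:ℝ)⁻¹ = -(2-2*H)⁻¹ := by rw [← inv_neg, neg_sub]
          simp only [div_eq_mul_inv, hi]
          ring
        rw [h1]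
        have hp1 : (0:ℝ) < ε^(2-2*H) * t^(2*H-2) :=
          mul_pos (Real.rpow_pos_of_pos hε0 _) (Real.rpow_pos_of_pos ht _)
        have hAB : A/(2-2*H) ≤ B := by
          rw [hB, div_eq_mul_inv, mul_add]
          have hpos : 0 ≤ A * (1/(2*H)) := by positivity
          have he : A * (1/(2-2*H)) = A * (2-2*H)⁻¹ := by rw [one_div]
          linarith [he]
        exact mul_le_mul_of_nonneg_right hAB hp1.le
      linarith [hint.trans_eq hDval]
    · -- case t < ε
      have hm_eq : m = 1 :=
        min_eq_left (Real.one_le_rpow ((one_le_div ht).mpr hlt.le) (by linarith))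
      set G : ℝ → ℝ := fun s => A * (ε⁻¹ * min ((s/ε)^(2*H-1)) ((s/ε)^(2*H-3))) with hG
      have hGmeas : Measurable G := by fun_prop
      have hGnonneg : ∀ s : ℝ, 0 < s → 0 ≤ G s := by
        intro s hs
        have h1 : (0:ℝ) ≤ (s/ε)^(2*H-1) := Real.rpow_nonneg (by positivity) _
        have h2 : (0:ℝ) ≤ (s/ε)^(2*H-3) := Real.rpow_nonneg (by positivity) _
        have := le_min h1 h2
        positivity
      -- integrability on the two pieces
      have hg1cont : ContinuousOn (fun s : ℝ => A * (ε⁻¹ * (s/ε)^(2*H-1))) (Set.Icc t ε) := by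
        apply ContinuousOn.mul continuousOn_const
        apply ContinuousOn.mul continuousOn_const
        apply ContinuousOn.rpow_const (continuousOn_id.div_const ε)
        intro x hx
        exact Or.inl (div_ne_zero (ne_of_gt (lt_of_lt_of_le ht hx.1)) hε0.ne')
      have hg1int : IntegrableOn (fun s : ℝ => A * (ε⁻¹ * (s/ε)^(2*H-1))) (Set.Ioc t ε) :=
        (hg1cont.integrableOn_Icc).mono_set Set.Ioc_subset_Icc_self
      have hg2int : IntegrableOn (fun s : ℝ => (A * ε^(2-2*H)) * s^(2*H-3)) (Set.Ioi ε) :=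
        (integrableOn_Ioi_rpow_of_lt (by linarith : 2*H-3 < -1) hε0).const_mul _
      have hcv3 : ∀ s : ℝ, 0 < s → ε⁻¹ * (s/ε)^(2*H-3) = ε^(2-2*H) * s^(2*H-3) := by
        intro s hs
        have hcv := eps_conv ε (2*H-3) hε0 s hs
        rw [show (-1-(2*H-3) : ℝ) = 2-2*H by ring] at hcv
        exact hcv
      have hG1 : IntegrableOn G (Set.Ioc t ε) := by
        apply Integrable.mono' hg1int hGmeas.aestronglyMeasurable
        filter_upwards [ae_restrict_mem measurableSet_Ioc] with s hs
        have hs0 : 0 < s := lt_trans ht hs.1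
        rw [Real.norm_eq_abs, abs_of_nonneg (hGnonneg s hs0)]
        have h1 : min ((s/ε)^(2*H-1)) ((s/ε)^(2*H-3)) ≤ (s/ε)^(2*H-1) := min_le_left _ _
        have : (0:ℝ) ≤ ε⁻¹ := by positivity
        rw [hG]
        apply mul_le_mul_of_nonneg_left _ hA.le
        exact mul_le_mul_of_nonneg_left h1 this
      have hG2 : IntegrableOn G (Set.Ioi ε) := by
        apply Integrable.mono' hg2int hGmeas.aestronglyMeasurable
        filter_upwards [ae_restrict_mem measurableSet_Ioi] with s hs
        have hs0 : 0 < s := lt_trans hε0 hs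
        rw [Real.norm_eq_abs, abs_of_nonneg (hGnonneg s hs0)]
        have h1 : min ((s/ε)^(2*H-1)) ((s/ε)^(2*H-3)) ≤ (s/ε)^(2*H-3) := min_le_right _ _
        have hε' : (0:ℝ) ≤ ε⁻¹ := by positivity
        calc G s ≤ A * (ε⁻¹ * (s/ε)^(2*H-3)) := by
              rw [hG]
              exact mul_le_mul_of_nonneg_left (mul_le_mul_of_nonneg_left h1 hε') hA.le
        _ = (A * ε^(2-2*H)) * s^(2*H-3) := by rw [hcv3 s hs0]; ring
      have hsub : Set.Ioi t = Set.Ioc t ε ∪ Set.Ioi ε := (Set.Ioc_union_Ioi_eq_Ioi hlt.le).symm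
      have hGint : IntegrableOn G (Set.Ioi t) := by
        rw [hsub]; exact hG1.union hG2
      -- main comparison
      have hfG : ∀ s ∈ Set.Ioi t, ε⁻¹ * (fouKernel H (s/ε))^2 ≤ G s := by
        intro s hs
        have hs0 : 0 < s := lt_trans ht hs
        have hq := hK (s/ε) (by positivity)
        have hminle : (fouKernel H (s/ε))^2 ≤ A * min ((s/ε)^(2*H-1)) ((s/ε)^(2*H-3)) := by
          rcases le_total ((s/ε)^(2*H-1)) ((s/ε)^(2*H-3)) with h | h
          · rw [min_eq_left h]; exact hq.1
          · rw [min_eq_right h]; exact hq.2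
        calc ε⁻¹ * (fouKernel H (s/ε))^2
            ≤ ε⁻¹ * (A * min ((s/ε)^(2*H-1)) ((s/ε)^(2*H-3))) :=
              mul_le_mul_of_nonneg_left hminle (by positivity)
        _ = G s := by rw [hG]; ring
      have hint : (∫ s in Set.Ioi t, ε⁻¹ * (fouKernel H (s/ε))^2) ≤ ∫ s in Set.Ioi t, G s := by
        apply integral_mono_of_nonneg
        · exact Filter.Eventually.of_forall fun s => by positivity
        · exact hGint
        · filter_upwards [ae_restrict_mem measurableSet_Ioi] with s hs using hfG s hs
      -- split and bound
      have hsplit : (∫ s in Set.Ioi t, G s)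
          = (∫ s in Set.Ioc t ε, G s) + ∫ s in Set.Ioi ε, G s := by
        rw [hsub]
        exact setIntegral_union (Set.Ioc_disjoint_Ioi le_rfl) measurableSet_Ioi hG1 hG2
      have hpiece1 : (∫ s in Set.Ioc t ε, G s) ≤ A/(2*H) := by
        have hmono : (∫ s in Set.Ioc t ε, G s)
            ≤ ∫ s in Set.Ioc t ε, A * (ε⁻¹ * (s/ε)^(2*H-1)) := by
          apply setIntegral_mono_on hG1 hg1int measurableSet_Ioc
          intro s hs
          have hs0 : 0 < s := lt_trans ht hs.1
          have hε' : (0:ℝ) ≤ ε⁻¹ := by positivity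
          rw [hG]
          exact mul_le_mul_of_nonneg_left
            (mul_le_mul_of_nonneg_left (min_le_left _ _) hε') hA.le
        have hcv4 : ∀ s : ℝ, 0 < s → A * (ε⁻¹ * (s/ε)^(2*H-1)) = (A * ε^(-(2*H))) * s^(2*H-1) := by
          intro s hs
          have hcv := eps_conv ε (2*H-1) hε0 s hs
          rw [show (-1-(2*H-1) : ℝ) = -(2*H) by ring] at hcv
          rw [hcv]; ring
        have hval : (∫ s in Set.Ioc t ε, A * (ε⁻¹ * (s/ε)^(2*H-1)))
            = (A * ε^(-(2*H))) * ((ε^(2*H) - t^(2*H))/(2*H)) := by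
          rw [setIntegral_congr_fun measurableSet_Ioc
            (fun s hs => hcv4 s (lt_trans ht hs.1))]
          rw [MeasureTheory.integral_const_mul]
          congr 1
          rw [← intervalIntegral.integral_of_le hlt.le,
            integral_rpow (Or.inl (by linarith : (-1:ℝ) < 2*H-1))]
          rw [show 2*H-1+1 = 2*H by ring]
        have hbound : (A * ε^(-(2*H))) * ((ε^(2*H) - t^(2*H))/(2*H)) ≤ A/(2*H) := by
          have hprod : ε^(-(2*H)) * ε^(2*H) = 1 := by
            rw [← Real.rpow_add hε0]; norm_num
          have h1 : (0:ℝ) < ε^(-(2*H)) := Real.rpow_pos_of_pos hε0 _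
          have h2 : (0:ℝ) ≤ t^(2*H) := Real.rpow_nonneg ht.le _
          have step : (A * ε^(-(2*H))) * ((ε^(2*H) - t^(2*H))/(2*H))
              ≤ (A * ε^(-(2*H))) * (ε^(2*H)/(2*H)) := by
            apply mul_le_mul_of_nonneg_left _ (by positivity)
            exact (div_le_div_iff_of_pos_right h2H).mpr (by linarith)
          have heq : (A * ε^(-(2*H))) * (ε^(2*H)/(2*H))
              = A * (ε^(-(2*H)) * ε^(2*H)) / (2*H) := by ring
          rw [heq, hprod, mul_one] at step
          exact step
        linarith [hmono.trans_eq hval |>.trans hbound]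
      have hpiece2 : (∫ s in Set.Ioi ε, G s) ≤ A/(2-2*H) := by
        have hmono : (∫ s in Set.Ioi ε, G s)
            ≤ ∫ s in Set.Ioi ε, (A * ε^(2-2*H)) * s^(2*H-3) := by
          apply setIntegral_mono_on hG2 hg2int measurableSet_Ioi
          intro s hs
          have hs0 : 0 < s := lt_trans hε0 hs
          have hε' : (0:ℝ) ≤ ε⁻¹ := by positivity
          calc G s ≤ A * (ε⁻¹ * (s/ε)^(2*H-3)) := by
                rw [hG]
                exact mul_le_mul_of_nonneg_left
                  (mul_le_mul_of_nonneg_left (min_le_right _ _) hε') hA.le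
          _ = (A * ε^(2-2*H)) * s^(2*H-3) := by rw [hcv3 s hs0]; ring
        have hval : (∫ s in Set.Ioi ε, (A * ε^(2-2*H)) * s^(2*H-3))
            = (A * ε^(2-2*H)) * (-ε^(2*H-2)/(2*H-2)) := by
          rw [MeasureTheory.integral_const_mul, integral_Ioi_rpow_of_lt (by linarith) hε0,
            show (2*H-3+1 : ℝ) = 2*H-2 by ring]
        have hbound : (A * ε^(2-2*H)) * (-ε^(2*H-2)/(2*H-2)) ≤ A/(2-2*H) := by
          have hprod : ε^(2-2*H) * ε^(2*H-2) = 1 := by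
            rw [← Real.rpow_add hε0]; norm_num
          have c1 : (2*H-2:ℝ) ≠ 0 := by linarith
          have c2 : (2-2*H:ℝ) ≠ 0 := by linarith
          have heq : (A * ε^(2-2*H)) * (-ε^(2*H-2)/(2*H-2))
              = A * (ε^(2-2*H) * ε^(2*H-2)) / (2-2*H) := by
            have hi : (2*H-2:ℝ)⁻¹ = -(2-2*H)⁻¹ := by rw [← inv_neg, neg_sub]
            simp only [div_eq_mul_inv, hi]
            ring
          rw [heq, hprod, mul_one]
        linarith [hmono.trans_eq hval |>.trans hbound]
      have : (∫ s in Set.Ioi t, ε⁻¹ * (fouKernel H (s/ε))^2) ≤ A/(2*H) + A/(2-2*H) := by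
        rw [hsplit] at hint
        linarith
      have hBeq : B * m^2 = A/(2*H) + A/(2-2*H) := by
        rw [hm_eq, hB]
        field_simp
      linarith [hBeq ▸ this]
  -- finish
  have h1 : Real.sqrt (∫ s in Set.Ioi t, ε⁻¹ * (fouKernel H (s/ε))^2)
      ≤ Real.sqrt (B * m^2) := Real.sqrt_le_sqrt key
  have h2 : Real.sqrt (B * m^2) = Real.sqrt B * m := by
    rw [Real.sqrt_mul hBpos.le, Real.sqrt_sq hm0]
  calc sigOU H * Real.sqrt (∫ s in Set.Ioi t, ε⁻¹ * (fouKernel H (s/ε))^2)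
      ≤ sigOU H * (Real.sqrt B * m) := by
        rw [← h2]; exact mul_le_mul_of_nonneg_left h1 (sigOU_pos H hH).le
  _ = sigOU H * Real.sqrt B * m := by ring
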